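/- arXiv:2506.14013 — 4 statements merged into one kernel-verified Lean document; each statement's English description precedes it below -/
import Mathlib

section
/- For all integers x and y satisfying x^2 - 4xy + y^2 = 1, the polynomial identity holds: letting a = 5x^2 - 12xy + 8y^2, b = (31x^4 - 55x^3 y + 75x^2 y^2 - 50xy^3 + 16y^4 - 17x^3 + 33x^2 y - 28xy^2 + 14y^3)/2, c = (31x^4 - 55x^3 y + 75x^2 y^2 - 50xy^3 + 16y^4 + 17x^3 - 33x^2 y + 28xy^2 - 14y^3)/2, one has abc + 1 = ((22y^5 - 24xy^4 - 8x^2 y^3 + 84x^3 y^2 - 119x^4 y + 58x^5)/2)^2. -/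
theorem abc_plus_one_square (x y : ℤ) (h : x ^ 2 - 4 * x * y + y ^ 2 = 1) :
    ((5 * (x : ℚ) ^ 2 - 12 * x * y + 8 * y ^ 2) *
      ((31 * (x : ℚ) ^ 4 - 55 * x ^ 3 * y + 75 * x ^ 2 * y ^ 2 - 50 * x * y ^ 3 + 16 * y ^ 4
        - 17 * x ^ 3 + 33 * x ^ 2 * y - 28 * x * y ^ 2 + 14 * y ^ 3) / 2) *
      ((31 * (x : ℚ) ^ 4 - 55 * x ^ 3 * y + 75 * x ^ 2 * y ^ 2 - 50 * x * y ^ 3 + 16 * y ^ 4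
        + 17 * x ^ 3 - 33 * x ^ 2 * y + 28 * x * y ^ 2 - 14 * y ^ 3) / 2)) + 1 =
    ((22 * (y : ℚ) ^ 5 - 24 * x * y ^ 4 - 8 * x ^ 2 * y ^ 3 + 84 * x ^ 3 * y ^ 2
      - 119 * x ^ 4 * y + 58 * x ^ 5) / 2) ^ 2 := by
  have hq : (x : ℚ) ^ 2 - 4 * x * y + y ^ 2 = 1 := by exact_mod_cast h
  linear_combination ((1441/4) * (x:ℚ)^8 + (-4507/2) * x^7 * y + (25581/4) * x^6 * y^2
    - x^6 + (-10968) * x^5 * y^3 + 12 * x^5 * y + 12735 * x^4 * y^4 - 51 * x^4 * y^2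
    - x^4 + (-10448) * x^3 * y^5 + 88 * x^3 * y^3 + 8 * x^3 * y + 5913 * x^2 * y^6
    - 51 * x^2 * y^4 - 18 * x^2 * y^2 - x^2 + (-2140) * x * y^7 + 12 * x * y^5
    + 8 * x * y^3 + 4 * x * y + 391 * y^8 - y^6 - y^4 - y^2 - 1) * hq
end

section
/- For all integers x, y with x^2 - 4xy + y^2 = 1, the identity 4·abc = (3y+8x)(5x^2-12xy+8y^2)(2y^3-2xy^2-2x^2y+3x^3)(10y^4-22xy^3+50x^2y^2-39x^3y+28x^4) holds, where a = 5x^2-12xy+8y^2, b = (31x^4-55x^3y+75x^2y^2-50xy^3+16y^4-17x^3+33x^2y-28xy^2+14y^3)/2, c = (31x^4-55x^3y+75x^2y^2-50xy^3+16y^4+17x^3-33x^2y+28xy^2-14y^3)/2. -/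
theorem four_abc_factorization (x y : ℤ) (h : x ^ 2 - 4 * x * y + y ^ 2 = 1) :
    4 * ((5 * (x : ℚ) ^ 2 - 12 * x * y + 8 * y ^ 2) *
      ((31 * (x : ℚ) ^ 4 - 55 * x ^ 3 * y + 75 * x ^ 2 * y ^ 2 - 50 * x * y ^ 3 + 16 * y ^ 4
        - 17 * x ^ 3 + 33 * x ^ 2 * y - 28 * x * y ^ 2 + 14 * y ^ 3) / 2) *
      ((31 * (x : ℚ) ^ 4 - 55 * x ^ 3 * y + 75 * x ^ 2 * y ^ 2 - 50 * x * y ^ 3 + 16 * y ^ 4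
        + 17 * x ^ 3 - 33 * x ^ 2 * y + 28 * x * y ^ 2 - 14 * y ^ 3) / 2)) =
    (3 * (y : ℚ) + 8 * x) * (5 * x ^ 2 - 12 * x * y + 8 * y ^ 2) *
      (2 * y ^ 3 - 2 * x * y ^ 2 - 2 * x ^ 2 * y + 3 * x ^ 3) *
      (10 * y ^ 4 - 22 * x * y ^ 3 + 50 * x ^ 2 * y ^ 2 - 39 * x ^ 3 * y + 28 * x ^ 4) := by
  have hq : (x : ℚ) ^ 2 - 4 * x * y + y ^ 2 = 1 := by exact_mod_cast congrArg (Int.cast : ℤ → ℚ) h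
  linear_combination ((5 * (x : ℚ) ^ 2 - 12 * x * y + 8 * y ^ 2) *
    (289 * (x : ℚ) ^ 6 - 1122 * x ^ 5 * y + 2041 * x ^ 4 * y ^ 2 - 2324 * x ^ 3 * y ^ 3
      + 1708 * x ^ 2 * y ^ 4 - 784 * x * y ^ 5 + 196 * y ^ 6)) * hq
end

section
/- For every positive integer k, the set {k, k+2, 4k+4, 16k^3+48k^2+44k+12} is a Diophantine quadruple: the product of any two distinct elements plus 1 is a perfect square. -/
theorem diophantine_quadruple_family (k : ℕ) (hk : 0 < k) :
    IsSquare (k * (k + 2) + 1) ∧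
    IsSquare (k * (4 * k + 4) + 1) ∧
    IsSquare (k * (16 * k ^ 3 + 48 * k ^ 2 + 44 * k + 12) + 1) ∧
    IsSquare ((k + 2) * (4 * k + 4) + 1) ∧
    IsSquare ((k + 2) * (16 * k ^ 3 + 48 * k ^ 2 + 44 * k + 12) + 1) ∧
    IsSquare ((4 * k + 4) * (16 * k ^ 3 + 48 * k ^ 2 + 44 * k + 12) + 1) := by
  refine ⟨⟨k + 1, by ring⟩, ⟨2 * k + 1, by ring⟩, ⟨4 * k ^ 2 + 6 * k + 1, by ring⟩,
    ⟨2 * k + 3, by ring⟩, ⟨4 * k ^ 2 + 10 * k + 5, by ring⟩, ⟨8 * k ^ 2 + 16 * k + 7, by ring⟩⟩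
end

section
/- For each n ≥ 0, setting x = P_{n+1}, y = P_n where P_0 = 0, P_1 = 1, P_{n+1} = 4P_n - P_{n-1}, the values a = 5x^2-12xy+8y^2, b = (31x^4-55x^3y+75x^2y^2-50xy^3+16y^4-17x^3+33x^2y-28xy^2+14y^3)/2, c = (31x^4-55x^3y+75x^2y^2-50xy^3+16y^4+17x^3-33x^2y+28xy^2-14y^3)/2 are positive integers greater than 1 (for n ≥ 1), and c = a + b + 2r where r = (17x^3-33x^2y-5x^2+28xy^2+12xy-14y^3-8y^2)/2. -/
def P : ℕ → ℤ
  | 0 => 0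
  | 1 => 1
  | (n + 2) => 4 * P (n + 1) - P n

lemma P_emod (n : ℕ) : P n % 2 = (n : ℤ) % 2 := by
  induction n using Nat.strong_induction_on with
  | _ n ih =>
    match n with
    | 0 => rfl
    | 1 => rfl
    | (m + 2) =>
      have h1 := ih m (by omega)
      show (4 * P (m + 1) - P m) % 2 = ((m : ℤ) + 2) % 2
      omega

lemma P_growth (n : ℕ) : 0 ≤ P n ∧ P n < P (n + 1) := by
  induction n with
  | zero => refine ⟨le_refl 0, ?_⟩; norm_num [P]
  | succ m ih =>
    obtain ⟨h0, h1⟩ := ih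
    refine ⟨by linarith, ?_⟩
    show P (m + 1) < 4 * P (m + 1) - P m
    linarith

lemma cast2_zero (N : ℤ) (h : N % 2 = 0) : (N : ZMod 2) = 0 :=
  (ZMod.intCast_zmod_eq_zero_iff_dvd N 2).mpr (Int.dvd_of_emod_eq_zero h)

lemma cast2_one (N : ℤ) (h : N % 2 = 1) : (N : ZMod 2) = 1 := by
  have h2 : ((N - 1 : ℤ) : ZMod 2) = 0 := cast2_zero _ (by omega)
  push_cast at h2
  linear_combination h2

lemma dvd_of_cast2 (N : ℤ) (h : (N : ZMod 2) = 0) : (2 : ℤ) ∣ N :=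
  (ZMod.intCast_zmod_eq_zero_iff_dvd N 2).mp h

theorem regular_triple_construction (n : ℕ) :
    let x : ℚ := P (n + 1)
    let y : ℚ := P n
    let a : ℚ := 5 * x ^ 2 - 12 * x * y + 8 * y ^ 2
    let b : ℚ := (31 * x ^ 4 - 55 * x ^ 3 * y + 75 * x ^ 2 * y ^ 2 - 50 * x * y ^ 3 + 16 * y ^ 4
      - 17 * x ^ 3 + 33 * x ^ 2 * y - 28 * x * y ^ 2 + 14 * y ^ 3) / 2
    let c : ℚ := (31 * x ^ 4 - 55 * x ^ 3 * y + 75 * x ^ 2 * y ^ 2 - 50 * x * y ^ 3 + 16 * y ^ 4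
      + 17 * x ^ 3 - 33 * x ^ 2 * y + 28 * x * y ^ 2 - 14 * y ^ 3) / 2
    let r : ℚ := (17 * x ^ 3 - 33 * x ^ 2 * y - 5 * x ^ 2 + 28 * x * y ^ 2 + 12 * x * y
      - 14 * y ^ 3 - 8 * y ^ 2) / 2
    (∃ B : ℤ, b = B) ∧ (∃ C : ℤ, c = C) ∧ (∃ R : ℤ, r = R) ∧
    (1 ≤ n → 1 < a ∧ 1 < b ∧ 1 < c) ∧
    c = a + b + 2 * r := by
  intro x y a b c r
  set X : ℤ := P (n + 1) with hXdef
  set Y : ℤ := P n with hYdef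
  have hpar : X % 2 = 0 ∧ Y % 2 = 1 ∨ X % 2 = 1 ∧ Y % 2 = 0 := by
    have h1 := P_emod (n + 1)
    have h2 := P_emod n
    rw [← hXdef] at h1
    rw [← hYdef] at h2
    push_cast at h1
    omega
  have hxX : x = (X : ℚ) := rfl
  have hyY : y = (Y : ℚ) := rfl
  -- evenness of the numerators
  have hNb : (2 : ℤ) ∣ (31 * X ^ 4 - 55 * X ^ 3 * Y + 75 * X ^ 2 * Y ^ 2 - 50 * X * Y ^ 3
      + 16 * Y ^ 4 - 17 * X ^ 3 + 33 * X ^ 2 * Y - 28 * X * Y ^ 2 + 14 * Y ^ 3) := by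
    apply dvd_of_cast2
    push_cast
    rcases hpar with ⟨hX, hY⟩ | ⟨hX, hY⟩
    · rw [cast2_zero X hX, cast2_one Y hY]; decide
    · rw [cast2_one X hX, cast2_zero Y hY]; decide
  have hNr : (2 : ℤ) ∣ (17 * X ^ 3 - 33 * X ^ 2 * Y - 5 * X ^ 2 + 28 * X * Y ^ 2 + 12 * X * Y
      - 14 * Y ^ 3 - 8 * Y ^ 2) := by
    apply dvd_of_cast2
    push_cast
    rcases hpar with ⟨hX, hY⟩ | ⟨hX, hY⟩
    · rw [cast2_zero X hX, cast2_one Y hY]; decide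
    · rw [cast2_one X hX, cast2_zero Y hY]; decide
  have hNc : (2 : ℤ) ∣ (31 * X ^ 4 - 55 * X ^ 3 * Y + 75 * X ^ 2 * Y ^ 2 - 50 * X * Y ^ 3
      + 16 * Y ^ 4 + 17 * X ^ 3 - 33 * X ^ 2 * Y + 28 * X * Y ^ 2 - 14 * Y ^ 3) := by
    obtain ⟨k, hk⟩ := hNb
    exact ⟨k + (17 * X ^ 3 - 33 * X ^ 2 * Y + 28 * X * Y ^ 2 - 14 * Y ^ 3), by linarith [hk]⟩
  obtain ⟨KB, hKB⟩ := hNb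
  obtain ⟨KC, hKC⟩ := hNc
  obtain ⟨KR, hKR⟩ := hNr
  refine ⟨⟨KB, ?_⟩, ⟨KC, ?_⟩, ⟨KR, ?_⟩, ?_, ?_⟩
  · show (31 * x ^ 4 - 55 * x ^ 3 * y + 75 * x ^ 2 * y ^ 2 - 50 * x * y ^ 3 + 16 * y ^ 4
      - 17 * x ^ 3 + 33 * x ^ 2 * y - 28 * x * y ^ 2 + 14 * y ^ 3) / 2 = (KB : ℚ)
    have := congrArg (fun z : ℤ => (z : ℚ)) hKB
    push_cast at this
    rw [hxX, hyY]
    field_simp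
    linarith [this]
  · show (31 * x ^ 4 - 55 * x ^ 3 * y + 75 * x ^ 2 * y ^ 2 - 50 * x * y ^ 3 + 16 * y ^ 4
      + 17 * x ^ 3 - 33 * x ^ 2 * y + 28 * x * y ^ 2 - 14 * y ^ 3) / 2 = (KC : ℚ)
    have := congrArg (fun z : ℤ => (z : ℚ)) hKC
    push_cast at this
    rw [hxX, hyY]
    field_simp
    linarith [this]
  · show (17 * x ^ 3 - 33 * x ^ 2 * y - 5 * x ^ 2 + 28 * x * y ^ 2 + 12 * x * y
      - 14 * y ^ 3 - 8 * y ^ 2) / 2 = (KR : ℚ)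
    have := congrArg (fun z : ℤ => (z : ℚ)) hKR
    push_cast at this
    rw [hxX, hyY]
    field_simp
    linarith [this]
  · intro hn
    obtain ⟨m, rfl⟩ : ∃ m, n = m + 1 := ⟨n - 1, by omega⟩
    have g0 := P_growth m
    have g1 := P_growth (m + 1)
    have hY1 : 1 ≤ Y := by
      rw [hYdef]
      omega
    have hXY : 3 * Y + 1 ≤ X := by
      rw [hXdef, hYdef]
      show 3 * P (m + 1) + 1 ≤ 4 * P (m + 1) - P m
      omega
    have hy1 : (1 : ℚ) ≤ y := by rw [hyY]; exact_mod_cast hY1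
    have hxy : 3 * y + 1 ≤ x := by
      rw [hxX, hyY]
      exact_mod_cast hXY
    have ha : 1 < a := by
      show 1 < 5 * x ^ 2 - 12 * x * y + 8 * y ^ 2
      nlinarith [sq_nonneg (x - 2 * y), sq_nonneg y]
    have hb : 1 < b := by
      show 1 < (31 * x ^ 4 - 55 * x ^ 3 * y + 75 * x ^ 2 * y ^ 2 - 50 * x * y ^ 3 + 16 * y ^ 4
        - 17 * x ^ 3 + 33 * x ^ 2 * y - 28 * x * y ^ 2 + 14 * y ^ 3) / 2
      rw [lt_div_iff₀ (by norm_num : (0:ℚ) < 2)]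
      have ht : (0:ℚ) ≤ x - 3 * y - 1 := by linarith
      have hs : (0:ℚ) ≤ y - 1 := by linarith
      nlinarith [mul_nonneg (pow_nonneg ht 0) (pow_nonneg hs 1),
        mul_nonneg (pow_nonneg ht 0) (pow_nonneg hs 2),
        mul_nonneg (pow_nonneg ht 0) (pow_nonneg hs 3),
        mul_nonneg (pow_nonneg ht 0) (pow_nonneg hs 4),
        mul_nonneg (pow_nonneg ht 1) (pow_nonneg hs 0),
        mul_nonneg (pow_nonneg ht 1) (pow_nonneg hs 1),
        mul_nonneg (pow_nonneg ht 1) (pow_nonneg hs 2),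
        mul_nonneg (pow_nonneg ht 1) (pow_nonneg hs 3),
        mul_nonneg (pow_nonneg ht 2) (pow_nonneg hs 0),
        mul_nonneg (pow_nonneg ht 2) (pow_nonneg hs 1),
        mul_nonneg (pow_nonneg ht 2) (pow_nonneg hs 2),
        mul_nonneg (pow_nonneg ht 3) (pow_nonneg hs 0),
        mul_nonneg (pow_nonneg ht 3) (pow_nonneg hs 1),
        mul_nonneg (pow_nonneg ht 4) (pow_nonneg hs 0)]
    refine ⟨ha, hb, ?_⟩
    show 1 < (31 * x ^ 4 - 55 * x ^ 3 * y + 75 * x ^ 2 * y ^ 2 - 50 * x * y ^ 3 + 16 * y ^ 4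
      + 17 * x ^ 3 - 33 * x ^ 2 * y + 28 * x * y ^ 2 - 14 * y ^ 3) / 2
    rw [lt_div_iff₀ (by norm_num : (0:ℚ) < 2)]
    nlinarith [sq_nonneg (x - 2 * y), sq_nonneg y, sq_nonneg (x - y)]
  · show c = a + b + 2 * r
    simp only [a, b, c, r]
    ring
end
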